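/- Let S be a nonempty tree in which every vertex has degree at least 2 (equivalently, an infinite tree without valence-one vertices). Then there exists a set M of edges of S such that every vertex of S is incident to exactly one edge of M. -/

import Mathlib

open SimpleGraph Walk

namespace TreeMatchAux

variable {V : Type*} {G : SimpleGraph V}

/-- The unique path from `r` to `v` in a tree. -/
noncomputable def pth (hT : G.IsTree) (r v : V) : G.Walk r v :=
  (hT.existsUnique_path r v).exists.choose

lemma pth_isPath (hT : G.IsTree) (r v : V) : (pth hT r v).IsPath :=
  (hT.existsUnique_path r v).exists.choose_spec

lemma pth_unique (hT : G.IsTree) {r v : V} (p : G.Walk r v) (hp : p.IsPath) :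
    p = pth hT r v :=
  (hT.existsUnique_path r v).unique hp (pth_isPath hT r v)

lemma concat_isPath {r v u : V} {p : G.Walk r v} (hp : p.IsPath) (ha : G.Adj v u)
    (hu : u ∉ p.support) : (p.concat ha).IsPath := by
  rw [isPath_def, support_concat]
  rw [isPath_def] at hp
  simp [List.concat_eq_append, List.nodup_append, hp, hu]
  exact fun a ha' h => hu (h ▸ ha')

lemma pth_concat_of_not_mem (hT : G.IsTree) {r v u : V} (ha : G.Adj v u)
    (hu : u ∉ (pth hT r v).support) :
    pth hT r u = (pth hT r v).concat ha :=
  (pth_unique hT _ (concat_isPath (pth_isPath hT r v) ha hu)).symm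

lemma adj_cases (hT : G.IsTree) (r : V) {v u : V} (ha : G.Adj v u) :
    (pth hT r u = (pth hT r v).concat ha) ∨
      (pth hT r v = (pth hT r u).concat ha.symm) := by
  classical
  by_cases hu : u ∈ (pth hT r v).support
  · right
    have hq : pth hT r u = (pth hT r v).takeUntil u hu :=
      (pth_unique hT _ ((pth_isPath hT r v).takeUntil hu)).symm
    have hvne : v ≠ u := ha.ne
    have hvnot : v ∉ ((pth hT r v).takeUntil u hu).support := by
      intro hvq
      have hnodup : (pth hT r v).support.Nodup := (isPath_def _).mp (pth_isPath hT r v)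
      have hsupp : (pth hT r v).support =
          ((pth hT r v).takeUntil u hu).support ++
            ((pth hT r v).dropUntil u hu).support.tail := by
        conv_lhs => rw [← (pth hT r v).take_spec hu]
        exact support_append _ _
      have hvd : v ∈ ((pth hT r v).dropUntil u hu).support := end_mem_support _
      rw [support_eq_cons] at hvd
      rcases List.mem_cons.mp hvd with h | hvtail
      · exact hvne h
      rw [hsupp] at hnodup
      exact (List.disjoint_of_nodup_append hnodup) hvq hvtail
    rw [← hq] at hvnot
    exact pth_concat_of_not_mem hT ha.symm hvnot
  · left
    exact pth_concat_of_not_mem hT ha hu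

lemma concat_inj {r u v w : V} {p : G.Walk r v} {q : G.Walk r w}
    (h1 : G.Adj v u) (h2 : G.Adj w u) (he : p.concat h1 = q.concat h2) : v = w := by
  have hs : (p.concat h1).reverse.support = (q.concat h2).reverse.support := by rw [he]
  rw [reverse_concat, reverse_concat, support_cons, support_cons,
    support_eq_cons p.reverse, support_eq_cons q.reverse] at hs
  exact (List.cons.injEq _ _ _ _).mp ((List.cons.injEq _ _ _ _).mp hs).2 |>.1

/-- Every vertex has a child (a neighbor whose path extends ours). -/
lemma exists_child (hT : G.IsTree) (r : V)
    (hdeg : ∀ v : V, ∃ u w : V, u ≠ w ∧ G.Adj v u ∧ G.Adj v w) (v : V) :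
    ∃ u, ∃ ha : G.Adj v u, pth hT r u = (pth hT r v).concat ha := by
  obtain ⟨u, w, huw, hu, hw⟩ := hdeg v
  rcases adj_cases hT r hu with h | h
  · exact ⟨u, hu, h⟩
  · rcases adj_cases hT r hw with h' | h'
    · exact ⟨w, hw, h'⟩
    · exact absurd (concat_inj hu.symm hw.symm (h.symm.trans h')) huw

variable (hT : G.IsTree) (r : V)
  (hdeg : ∀ v : V, ∃ u w : V, u ≠ w ∧ G.Adj v u ∧ G.Adj v w)

/-- A chosen child of each vertex. -/
noncomputable def nxt (v : V) : V := (exists_child hT r hdeg v).choose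

lemma nxt_spec (v : V) : ∃ ha : G.Adj v (nxt hT r hdeg v),
    pth hT r (nxt hT r hdeg v) = (pth hT r v).concat ha :=
  (exists_child hT r hdeg v).choose_spec

lemma adj_nxt (v : V) : G.Adj v (nxt hT r hdeg v) := (nxt_spec hT r hdeg v).choose

lemma length_nxt (v : V) :
    (pth hT r (nxt hT r hdeg v)).length = (pth hT r v).length + 1 := by
  obtain ⟨ha, h⟩ := nxt_spec hT r hdeg v
  rw [h, length_concat]

lemma nxt_injective {u v : V} (h : nxt hT r hdeg u = nxt hT r hdeg v) : u = v := by
  obtain ⟨ha, hpa⟩ := nxt_spec hT r hdeg u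
  obtain ⟨hb, hpb⟩ := nxt_spec hT r hdeg v
  revert ha hpa
  rw [h]
  intro ha hpa
  exact concat_inj ha hb (hpa.symm.trans hpb)

end TreeMatchAux

namespace TreeMatchAux

variable {V : Type*} {G : SimpleGraph V}

open Classical in
/-- The position of a vertex within its chain of chosen children. -/
noncomputable def ht (hT : G.IsTree) (r : V)
    (hdeg : ∀ v : V, ∃ u w : V, u ≠ w ∧ G.Adj v u ∧ G.Adj v w) (v : V) : ℕ :=
  if h : ∃ u, nxt hT r hdeg u = v then ht hT r hdeg h.choose + 1 else 0
termination_by (pth hT r v).length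
decreasing_by
  have h2 := length_nxt hT r hdeg h.choose
  rw [h.choose_spec] at h2
  omega

lemma ht_nxt (hT : G.IsTree) (r : V)
    (hdeg : ∀ v : V, ∃ u w : V, u ≠ w ∧ G.Adj v u ∧ G.Adj v w) (v : V) :
    ht hT r hdeg (nxt hT r hdeg v) = ht hT r hdeg v + 1 := by
  rw [ht]
  have hx : ∃ u, nxt hT r hdeg u = nxt hT r hdeg v := ⟨v, rfl⟩
  rw [dif_pos hx, nxt_injective hT r hdeg hx.choose_spec]

lemma exists_of_ht_ne (hT : G.IsTree) (r : V)
    (hdeg : ∀ v : V, ∃ u w : V, u ≠ w ∧ G.Adj v u ∧ G.Adj v w) (v : V)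
    (h : ht hT r hdeg v ≠ 0) : ∃ u, nxt hT r hdeg u = v := by
  by_contra hc
  rw [ht, dif_neg hc] at h
  exact h rfl

end TreeMatchAux

open TreeMatchAux in
/-- In a tree in which every vertex has degree at least two, there is a set of edges
containing exactly one edge incident to each vertex. -/
theorem tree_exists_perfect_edge_selection {V : Type*} (G : SimpleGraph V)
    (hT : G.IsTree)
    (hdeg : ∀ v : V, ∃ u w : V, u ≠ w ∧ G.Adj v u ∧ G.Adj v w) :
    ∃ M : Set (Sym2 V), M ⊆ G.edgeSet ∧ ∀ v : V, ∃! e : Sym2 V, e ∈ M ∧ v ∈ e := by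
  classical
  obtain ⟨r⟩ := hT.isConnected.nonempty
  refine ⟨{e | ∃ v, Even (ht hT r hdeg v) ∧ e = s(v, nxt hT r hdeg v)}, ?_, ?_⟩
  · rintro e ⟨v, -, rfl⟩
    exact (adj_nxt hT r hdeg v : _)
  · intro v
    by_cases hv : Even (ht hT r hdeg v)
    · refine ⟨s(v, nxt hT r hdeg v), ⟨⟨v, hv, rfl⟩, Sym2.mem_mk_left _ _⟩, ?_⟩
      rintro e ⟨⟨w, hw, rfl⟩, hve⟩
      rcases Sym2.mem_iff.mp hve with rfl | rfl
      · rfl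
      · exfalso
        have h1 := ht_nxt hT r hdeg w
        rw [h1, Nat.even_add_one] at hv
        exact hv hw
    · have h0 : ht hT r hdeg v ≠ 0 := fun e => hv (e ▸ Even.zero)
      obtain ⟨u, hu⟩ := exists_of_ht_ne hT r hdeg v h0
      have hhu : ht hT r hdeg v = ht hT r hdeg u + 1 := by
        rw [← hu, ht_nxt]
      have heu : Even (ht hT r hdeg u) := by
        rw [hhu, Nat.even_add_one, not_not] at hv
        exact hv
      refine ⟨s(u, nxt hT r hdeg u),
        ⟨⟨u, heu, rfl⟩, by rw [hu]; exact Sym2.mem_mk_right _ _⟩, ?_⟩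
      rintro e ⟨⟨w, hw, rfl⟩, hve⟩
      rcases Sym2.mem_iff.mp hve with rfl | h2
      · exact absurd hw hv
      · have hwu : w = u := nxt_injective hT r hdeg (h2.symm.trans hu.symm)
        subst hwu
        rfl
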